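/- Let m = 2r be a positive even integer, n ≥ 1, and k = m + n. Let H^1, …, H^n be symmetric m×m real matrices. Then (1/ω_{k−1}) ∫_{S^{n−1}} det(Σ_{γ=1}^{n} ν_γ H^γ) dV_{S^{n−1}}(ν) = (1/(2^m π^r)) Σ_{σ ∈ S_m} Σ_{α} sgn(σ) (∏_{i=1}^{n} (2a_i)!/a_i!) ∏_{t=1}^{m} H^{α_t}_{t, σ(t)}, where the inner sum is over all m-tuples α = (α_1, …, α_m) ∈ {1, …, n}^m in which every index i ∈ {1, …, n} occurs an even number 2a_i of times (so that a_1 + ⋯ + a_n = r), and the a_i in the weight are these multiplicities. -/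

import Mathlib

open MeasureTheory Finset

/-- The standard surface (spherical) measure on the unit sphere `S^{n-1} ⊂ ℝ^n`. -/
noncomputable def sphereMeasure (n : ℕ) :
    Measure (Metric.sphere (0 : EuclideanSpace ℝ (Fin n)) 1) :=
  (volume : Measure (EuclideanSpace ℝ (Fin n))).toSphere

/-- `ω_d`, the `d`-dimensional volume of the unit sphere `S^d ⊂ ℝ^{d+1}`,
namely `2 π^{(d+1)/2} / Γ((d+1)/2)` (so that `ω_0 = 2`). -/
noncomputable def sphereVolume (d : ℕ) : ℝ :=
  2 * Real.pi ^ (((d : ℝ) + 1) / 2) / Real.Gamma (((d : ℝ) + 1) / 2)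

open Real Set Metric




lemma radial_int (d : ℕ) :
    ∫ x in Ioi (0:ℝ), x ^ d * Real.exp (-x ^ 2) = Real.Gamma (((d : ℝ) + 1) / 2) / 2 := by
  have h := integral_rpow_mul_exp_neg_rpow (p := 2) (q := (d : ℝ)) two_pos
    (lt_of_lt_of_le neg_one_lt_zero (Nat.cast_nonneg d))
  rw [setIntegral_congr_fun measurableSet_Ioi
    (fun x hx => by
      rw [Real.rpow_natCast, show (2:ℝ) = ((2:ℕ):ℝ) by norm_num, Real.rpow_natCast])] at h
  rw [h]; ring

lemma gauss_odd {d : ℕ} (hd : Odd d) :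
    ∫ x : ℝ, x ^ d * Real.exp (-x ^ 2) = 0 := by
  have h := (Measure.measurePreserving_neg (volume : Measure ℝ)).integral_comp
    (Homeomorph.neg ℝ).measurableEmbedding (fun x : ℝ => x ^ d * Real.exp (-x ^ 2))
  have hneg : ∀ x : ℝ, (Homeomorph.neg ℝ) x = -x := fun _ => rfl
  have h2 : ∀ x : ℝ, (-x) ^ d * Real.exp (-(-x) ^ 2) = -(x ^ d * Real.exp (-x ^ 2)) := by
    intro x; rw [hd.neg_pow, neg_sq, neg_mul]
  simp only [h2, integral_neg] at h
  linarith

lemma gauss_even {d : ℕ} (hd : Even d) :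
    ∫ x : ℝ, x ^ d * Real.exp (-x ^ 2) = Real.Gamma (((d : ℝ) + 1) / 2) := by
  have habs : ∀ x : ℝ, |x| ^ d * Real.exp (-|x| ^ 2) = x ^ d * Real.exp (-x ^ 2) := by
    intro x; rw [hd.pow_abs, sq_abs]
  calc ∫ x : ℝ, x ^ d * Real.exp (-x ^ 2)
      = ∫ x : ℝ, |x| ^ d * Real.exp (-|x| ^ 2) := by simp_rw [habs]
    _ = 2 * ∫ x in Ioi (0:ℝ), x ^ d * Real.exp (-x ^ 2) :=
        integral_comp_abs (f := fun x => x ^ d * Real.exp (-x ^ 2))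
    _ = _ := by rw [radial_int]; ring

lemma Gamma_nat_half (a : ℕ) :
    Real.Gamma ((a : ℝ) + 1/2) = Real.sqrt Real.pi * (2*a).factorial / (4 ^ a * a.factorial) := by
  induction a with
  | zero =>
      rw [show ((0:ℕ):ℝ) + 1/2 = 1/2 by norm_num, Real.Gamma_one_half_eq]
      norm_num
  | succ a ih =>
      have h1 : ((a+1 : ℕ) : ℝ) + 1/2 = ((a:ℝ) + 1/2) + 1 := by push_cast; ring
      rw [h1, Real.Gamma_add_one (by positivity), ih]
      have h2 : (2*(a+1)) = (2*a+1) + 1 := by ring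
      rw [h2, Nat.factorial_succ, show (2*a+1) = (2*a) + 1 from rfl, Nat.factorial_succ,
        Nat.factorial_succ]
      have h4 : (4:ℝ) ^ (a+1) = 4 * 4 ^ a := by ring
      push_cast [h4]
      have hfa : (0:ℝ) < a.factorial := by exact_mod_cast a.factorial_pos
      have h4a : (0:ℝ) < 4 ^ a := by positivity
      field_simp
      ring



lemma gauss_prod (n : ℕ) (c : Fin n → ℕ) :
    ∫ x : EuclideanSpace ℝ (Fin n), (∏ i, x i ^ c i) * Real.exp (-‖x‖ ^ 2)
      = ∏ i, ∫ t : ℝ, t ^ c i * Real.exp (-t ^ 2) := by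
  have hmp := (EuclideanSpace.volume_preserving_symm_measurableEquiv_toLp (Fin n)).symm
  rw [← hmp.integral_comp (MeasurableEquiv.measurableEmbedding _)
    (fun x => (∏ i, x i ^ c i) * Real.exp (-‖x‖ ^ 2))]
  have key : ∀ y : Fin n → ℝ,
      (∏ i, ((MeasurableEquiv.toLp 2 (Fin n → ℝ)) y) i ^ c i) *
        Real.exp (-‖(MeasurableEquiv.toLp 2 (Fin n → ℝ)) y‖ ^ 2)
      = ∏ i, (y i ^ c i * Real.exp (-(y i) ^ 2)) := by
    intro y
    have hco : ∀ i, ((MeasurableEquiv.toLp 2 (Fin n → ℝ)) y) i = y i := fun _ => rfl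
    have hnorm : ‖(MeasurableEquiv.toLp 2 (Fin n → ℝ)) y‖ ^ 2 = ∑ i, (y i) ^ 2 := by
      rw [EuclideanSpace.norm_eq]
      simp only [hco, Real.norm_eq_abs, sq_abs]
      rw [Real.sq_sqrt (by positivity)]
    simp only [hco, hnorm, prod_mul_distrib]
    rw [← Real.exp_sum]
    congr 1
    rw [← Finset.sum_neg_distrib]
  simp only [MeasurableEquiv.symm_symm, key]
  exact integral_fintype_prod_eq_prod (ι := Fin n) (μ := fun _ => volume) (fun i (t : ℝ) => t ^ c i * Real.exp (-t ^ 2))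

lemma polar_int {n : ℕ} (hn : 0 < n) (g : EuclideanSpace ℝ (Fin n) → ℝ) :
    ∫ x, g x = ∫ p : sphere (0 : EuclideanSpace ℝ (Fin n)) 1 × Ioi (0:ℝ),
        g ((p.2 : ℝ) • (p.1 : EuclideanSpace ℝ (Fin n)))
      ∂((sphereMeasure n).prod (Measure.volumeIoiPow (n - 1))) := by
  haveI : Nontrivial (EuclideanSpace ℝ (Fin n)) :=
    Module.nontrivial_of_finrank_pos (R := ℝ)
      (by rw [finrank_euclideanSpace_fin]; exact hn)
  have hdim : Module.finrank ℝ (EuclideanSpace ℝ (Fin n)) = n := finrank_euclideanSpace_fin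
  have h1 : ∫ x, g x ∂(volume : Measure (EuclideanSpace ℝ (Fin n)))
      = ∫ x : ({0}ᶜ : Set (EuclideanSpace ℝ (Fin n))), g x ∂(volume.comap Subtype.val) := by
    rw [integral_subtype_comap (measurableSet_singleton _).compl,
      MeasureTheory.restrict_compl_singleton]

  have h2 := (Measure.measurePreserving_homeomorphUnitSphereProd
        (volume : Measure (EuclideanSpace ℝ (Fin n)))).integral_comp
      (Homeomorph.measurableEmbedding _)
      (fun p : sphere (0 : EuclideanSpace ℝ (Fin n)) 1 × Ioi (0:ℝ) =>
        g ((p.2 : ℝ) • (p.1 : EuclideanSpace ℝ (Fin n))))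
  rw [hdim] at h2
  rw [h1, show sphereMeasure n = (volume : Measure (EuclideanSpace ℝ (Fin n))).toSphere from rfl,
    ← h2]
  refine integral_congr_ae (Filter.Eventually.of_forall fun x => ?_)
  simp only [homeomorphUnitSphereProd_apply_fst_coe, homeomorphUnitSphereProd_apply_snd_coe]
  rw [smul_inv_smul₀ (norm_ne_zero_iff.2 x.2)]

lemma radial_int' (d : ℕ) :
    ∫ x in Ioi (0:ℝ), x ^ d * Real.exp (-x ^ 2) = Real.Gamma (((d : ℝ) + 1) / 2) / 2 := by
  have h := integral_rpow_mul_exp_neg_rpow (p := 2) (q := (d : ℝ)) two_pos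
    (lt_of_lt_of_le neg_one_lt_zero (Nat.cast_nonneg d))
  rw [setIntegral_congr_fun measurableSet_Ioi
    (fun x hx => by
      rw [Real.rpow_natCast, show (2:ℝ) = ((2:ℕ):ℝ) by norm_num, Real.rpow_natCast])] at h
  rw [h]; ring

lemma sphere_moment {n : ℕ} (hn : 0 < n) (c : Fin n → ℕ) :
    ∫ ν : sphere (0 : EuclideanSpace ℝ (Fin n)) 1,
        ∏ i, ((ν : EuclideanSpace ℝ (Fin n)) i) ^ c i ∂(sphereMeasure n)
      = (∏ i, ∫ t : ℝ, t ^ c i * Real.exp (-t ^ 2)) * 2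
          / Real.Gamma ((((∑ i, c i : ℕ) : ℝ) + n) / 2) := by
  set S : ℕ := ∑ i, c i with hS
  have key : (∏ i, ∫ t : ℝ, t ^ c i * Real.exp (-t ^ 2))
      = (∫ ν : sphere (0 : EuclideanSpace ℝ (Fin n)) 1,
          ∏ i, ((ν : EuclideanSpace ℝ (Fin n)) i) ^ c i ∂(sphereMeasure n))
        * (Real.Gamma (((S : ℝ) + n) / 2) / 2) := by
    rw [← gauss_prod n c, polar_int hn]
    have hpt : ∀ p : sphere (0 : EuclideanSpace ℝ (Fin n)) 1 × Ioi (0:ℝ),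
        (∏ i, (((p.2 : ℝ) • (p.1 : EuclideanSpace ℝ (Fin n))) i) ^ c i) *
            Real.exp (-‖(p.2 : ℝ) • (p.1 : EuclideanSpace ℝ (Fin n))‖ ^ 2)
        = (∏ i, ((p.1 : EuclideanSpace ℝ (Fin n)) i) ^ c i) *
            ((p.2 : ℝ) ^ S * Real.exp (-(p.2 : ℝ) ^ 2)) := by
      rintro ⟨ν, ρ⟩
      have hρ : (0:ℝ) < ρ := ρ.2
      have hν : ‖(ν : EuclideanSpace ℝ (Fin n))‖ = 1 := mem_sphere_zero_iff_norm.mp ν.2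
      have hsm : ∀ i, (((ρ : ℝ) • (ν : EuclideanSpace ℝ (Fin n))) i)
          = (ρ : ℝ) * (ν : EuclideanSpace ℝ (Fin n)) i := fun i => rfl
      have hnrm : ‖(ρ : ℝ) • (ν : EuclideanSpace ℝ (Fin n))‖ = (ρ : ℝ) := by
        rw [norm_smul, hν, Real.norm_eq_abs, abs_of_pos hρ, mul_one]
      simp only [hsm, hnrm, mul_pow, prod_mul_distrib, Finset.prod_pow_eq_pow_sum]
      ring
    haveI : IsFiniteMeasure (sphereMeasure n) := by
      unfold sphereMeasure; infer_instance
    simp only [hpt]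
    rw [integral_prod_mul (μ := sphereMeasure n) (ν := Measure.volumeIoiPow (n-1))
      (f := fun ν : sphere (0 : EuclideanSpace ℝ (Fin n)) 1 =>
        ∏ i, ((ν : EuclideanSpace ℝ (Fin n)) i) ^ c i)
      (g := fun ρ : Ioi (0:ℝ) => (ρ : ℝ) ^ S * Real.exp (-(ρ : ℝ) ^ 2))]
    congr 1
    -- radial part
    simp only [Measure.volumeIoiPow, ENNReal.ofReal]
    rw [integral_withDensity_eq_integral_smul
      ((measurable_subtype_coe.pow_const _).real_toNNReal)
      (fun ρ : Ioi (0:ℝ) => (ρ : ℝ) ^ S * Real.exp (-(ρ : ℝ) ^ 2)),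
      integral_subtype_comap measurableSet_Ioi
        (fun y : ℝ => (y ^ (n - 1)).toNNReal • (y ^ S * Real.exp (-y ^ 2)))]
    rw [setIntegral_congr_fun measurableSet_Ioi (g := fun x : ℝ =>
        x ^ (n - 1 + S) * Real.exp (-x ^ 2)) (fun x hx => by
      rw [NNReal.smul_def, Real.coe_toNNReal _ (pow_nonneg (le_of_lt hx) _), smul_eq_mul]
      show x ^ (n - 1) * (x ^ S * Real.exp (-x ^ 2)) = x ^ (n - 1 + S) * Real.exp (-x ^ 2)
      rw [pow_add]; ring)]
    rw [radial_int']
    congr 2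
    have h0 : (n - 1 + S) + 1 = S + n := by omega
    have h' : ((n - 1 + S : ℕ) : ℝ) + 1 = ((S + n : ℕ) : ℝ) := by exact_mod_cast congrArg (fun k : ℕ => (k : ℝ)) h0
    rw [h']; push_cast; ring
  have hΓ : Real.Gamma (((S : ℝ) + n) / 2) ≠ 0 := by
    have : (0:ℝ) < ((S : ℝ) + n) / 2 := by
      have : (0:ℝ) < n := by exact_mod_cast hn
      positivity
    exact ne_of_gt (Real.Gamma_pos_of_pos this)
  rw [key]
  field_simp


lemma term_eval (r n : ℕ) (hr : 0 < r) (hn : 0 < n) (c : Fin n → ℕ)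
    (hsum : ∑ i, c i = 2 * r) :
    (1 / sphereVolume (2 * r + n - 1)) *
      ∫ ν : Metric.sphere (0 : EuclideanSpace ℝ (Fin n)) 1,
        ∏ i, ((ν : EuclideanSpace ℝ (Fin n)) i) ^ c i ∂(sphereMeasure n)
    = if ∀ i, Even (c i) then
        (1 / (2 ^ (2 * r) * Real.pi ^ r)) *
          ∏ i, (((c i).factorial : ℝ) / (((c i / 2).factorial : ℝ)))
      else 0 := by
  have hcast : (((2 * r + n - 1 : ℕ) : ℝ) + 1) / 2 = (((2 * r + n : ℕ) : ℝ)) / 2 := by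
    have h0 : (2 * r + n - 1) + 1 = 2 * r + n := by omega
    have := congrArg (fun k : ℕ => (k : ℝ)) h0
    push_cast at this ⊢
    linarith
  have hΓpos : 0 < Real.Gamma (((2 * r + n : ℕ) : ℝ) / 2) :=
    Real.Gamma_pos_of_pos (by positivity)
  rw [sphere_moment hn c, hsum]
  by_cases hev : ∀ i, Even (c i)
  · rw [if_pos hev]
    have hG : ∀ i, ∫ t : ℝ, t ^ c i * Real.exp (-t ^ 2)
        = Real.sqrt Real.pi * ((c i).factorial : ℝ)
            / (4 ^ (c i / 2) * (((c i / 2).factorial : ℝ))) := by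
      intro i
      rw [gauss_even (hev i)]
      have ha : c i / 2 * 2 = c i := Nat.div_mul_cancel (hev i).two_dvd
      have hc : (c i : ℝ) = 2 * ((c i / 2 : ℕ) : ℝ) := by
        rw [show (2 : ℝ) * ((c i / 2 : ℕ) : ℝ) = (((c i / 2) * 2 : ℕ) : ℝ) by push_cast; ring, ha]
      rw [show ((c i : ℝ) + 1) / 2 = ((c i / 2 : ℕ) : ℝ) + 1 / 2 by rw [hc]; ring,
        Gamma_nat_half (c i / 2), show 2 * (c i / 2) = c i by omega]
    have hsum2 : ∑ i, c i / 2 = r := by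
      have h1 : 2 * ∑ i, c i / 2 = 2 * r := by
        rw [Finset.mul_sum, ← hsum]
        exact Finset.sum_congr rfl fun i _ => by
          have := Nat.div_mul_cancel (hev i).two_dvd; omega
      omega
    have hprod : (∏ i, ∫ t : ℝ, t ^ c i * Real.exp (-t ^ 2))
        = (Real.sqrt Real.pi) ^ n * (∏ i, ((c i).factorial : ℝ))
            / (4 ^ r * ∏ i, (((c i / 2).factorial : ℝ))) := by
      simp only [hG]
      rw [Finset.prod_div_distrib, Finset.prod_mul_distrib, Finset.prod_mul_distrib,
        Finset.prod_const, Finset.prod_pow_eq_pow_sum, hsum2, Finset.card_univ,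
        Fintype.card_fin]
    rw [hprod]
    -- unfold sphereVolume
    rw [sphereVolume, hcast]
    have hπ : Real.pi ^ ((((2 * r + n : ℕ) : ℝ)) / 2)
        = Real.pi ^ r * Real.sqrt Real.pi ^ n := by
      rw [show (((2 * r + n : ℕ) : ℝ)) / 2 = (r : ℝ) + (n : ℝ) * (1 / 2) by push_cast; ring,
        Real.rpow_add Real.pi_pos, Real.rpow_natCast]
      congr 1
      rw [Real.sqrt_eq_rpow, ← Real.rpow_natCast (Real.pi ^ ((1:ℝ)/2)) n,
        ← Real.rpow_mul Real.pi_pos.le]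
      ring_nf
    rw [hπ, Finset.prod_div_distrib]
    have h4 : (4 : ℝ) ^ r = 2 ^ (2 * r) := by
      rw [show (4:ℝ) = 2 ^ 2 by norm_num, ← pow_mul]
    have hsπ : (0:ℝ) < Real.sqrt Real.pi := Real.sqrt_pos.mpr Real.pi_pos
    have hfac : ∀ i, (0:ℝ) < (((c i / 2).factorial : ℝ)) := fun i => by
      exact_mod_cast (c i / 2).factorial_pos
    have hfacp : (0:ℝ) < ∏ i, (((c i / 2).factorial : ℝ)) := Finset.prod_pos fun i _ => hfac i
    rw [h4]
    have hπpos := Real.pi_pos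
    field_simp
    ring_nf
    congr 1
    push_cast
    ring
  · rw [if_neg hev]
    push_neg at hev
    obtain ⟨i0, hi0⟩ := hev
    have : (∏ i, ∫ t : ℝ, t ^ c i * Real.exp (-t ^ 2)) = 0 :=
      Finset.prod_eq_zero (Finset.mem_univ i0)
        (gauss_odd (Nat.not_even_iff_odd.mp hi0))
    rw [this]
    simp

/-- The averaged generalized Gaussian curvature in terms of the second fundamental
forms `H^γ`: with `m = 2r` and `k = m + n`,
`(1/ω_{k-1}) ∫_{S^{n-1}} det(∑ ν_γ H^γ) dV
  = (1/(2^m π^r)) ∑_{σ ∈ S_m} ∑_α sgn(σ) (∏ (2a_i)!/a_i!) ∏_t H^{α_t}_{t,σ(t)}`,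
where the inner sum runs over tuples `α ∈ {1,…,n}^m` in which each index `i` occurs an
even number `2a_i` of times. -/
theorem averaged_curvature_expansion (r n : ℕ) (hr : 0 < r) (hn : 0 < n)
    (H : Fin n → Matrix (Fin (2 * r)) (Fin (2 * r)) ℝ) (hH : ∀ γ, (H γ).IsSymm) :
    (1 / sphereVolume (2 * r + n - 1)) *
      ∫ ν, Matrix.det (∑ γ : Fin n, ((ν : EuclideanSpace ℝ (Fin n)) γ) • H γ)
        ∂(sphereMeasure n) =
    (1 / (2 ^ (2 * r) * Real.pi ^ r)) *
      ∑ σ : Equiv.Perm (Fin (2 * r)), ∑ α : Fin (2 * r) → Fin n,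
        if ∀ i : Fin n, Even (Finset.univ.filter (fun t => α t = i)).card then
          ((Equiv.Perm.sign σ : ℤ) : ℝ) *
            (∏ i : Fin n,
              ((Nat.factorial ((Finset.univ.filter (fun t => α t = i)).card) : ℝ) /
                (Nat.factorial ((Finset.univ.filter (fun t => α t = i)).card / 2) : ℝ))) *
            ∏ t : Fin (2 * r), H (α t) t (σ t)
        else 0 := by
  classical
  set c : (Fin (2 * r) → Fin n) → Fin n → ℕ :=
    fun α i => (Finset.univ.filter (fun t => α t = i)).card with hc
  -- pointwise determinant expansion
  have hdet : ∀ ν : Metric.sphere (0 : EuclideanSpace ℝ (Fin n)) 1,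
      Matrix.det (∑ γ : Fin n, ((ν : EuclideanSpace ℝ (Fin n)) γ) • H γ)
      = ∑ σ : Equiv.Perm (Fin (2 * r)), ∑ α : Fin (2 * r) → Fin n,
          (((Equiv.Perm.sign σ : ℤ) : ℝ) * ∏ t, H (α t) t (σ t)) *
            ∏ i, ((ν : EuclideanSpace ℝ (Fin n)) i) ^ c α i := by
    intro ν
    rw [← Matrix.det_transpose, Matrix.det_apply']
    refine Finset.sum_congr rfl fun σ _ => ?_
    have hentry : ∀ t, Matrix.transpose (∑ γ : Fin n, ((ν : EuclideanSpace ℝ (Fin n)) γ) • H γ) (σ t) t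
        = ∑ γ : Fin n, ((ν : EuclideanSpace ℝ (Fin n)) γ) * H γ t (σ t) := by
      intro t
      simp [Matrix.transpose_apply, Matrix.sum_apply, Matrix.smul_apply, smul_eq_mul]
    simp only [hentry]
    rw [Finset.prod_univ_sum, Finset.mul_sum, Fintype.piFinset_univ]
    refine Finset.sum_congr rfl fun α _ => ?_
    rw [Finset.prod_mul_distrib]
    have hνα : (∏ t, (ν : EuclideanSpace ℝ (Fin n)) (α t))
        = ∏ i, ((ν : EuclideanSpace ℝ (Fin n)) i) ^ c α i := by
      rw [← Finset.prod_fiberwise_of_maps_to (fun t (_ : t ∈ Finset.univ) => Finset.mem_univ (α t))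
        (fun t => (ν : EuclideanSpace ℝ (Fin n)) (α t))]
      refine Finset.prod_congr rfl fun i _ => ?_
      rw [Finset.prod_congr rfl (fun t ht =>
          by rw [(Finset.mem_filter.mp ht).2] :
          ∀ t ∈ Finset.univ.filter (fun t => α t = i),
            (ν : EuclideanSpace ℝ (Fin n)) (α t) = (ν : EuclideanSpace ℝ (Fin n)) i),
        Finset.prod_const]
    rw [hνα]; ring
  -- integrability
  haveI : IsFiniteMeasure (sphereMeasure n) := by unfold sphereMeasure; infer_instance
  have hint : ∀ (K : ℝ) (d : Fin n → ℕ),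
      Integrable (fun ν : Metric.sphere (0 : EuclideanSpace ℝ (Fin n)) 1 =>
        K * ∏ i, ((ν : EuclideanSpace ℝ (Fin n)) i) ^ d i) (sphereMeasure n) := by
    intro K d
    have hcont : Continuous (fun ν : Metric.sphere (0 : EuclideanSpace ℝ (Fin n)) 1 =>
        K * ∏ i, ((ν : EuclideanSpace ℝ (Fin n)) i) ^ d i) := by
      refine continuous_const.mul (continuous_finset_prod _ fun i _ => ?_)
      exact ((EuclideanSpace.proj i).continuous.comp continuous_subtype_val).pow _
    exact hcont.integrable_of_hasCompactSupport (HasCompactSupport.of_compactSpace _)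
  have hswap : (∫ ν, Matrix.det (∑ γ : Fin n, ((ν : EuclideanSpace ℝ (Fin n)) γ) • H γ)
        ∂(sphereMeasure n))
      = ∑ σ : Equiv.Perm (Fin (2 * r)), ∑ α : Fin (2 * r) → Fin n,
          (((Equiv.Perm.sign σ : ℤ) : ℝ) * ∏ t, H (α t) t (σ t)) *
            ∫ ν : Metric.sphere (0 : EuclideanSpace ℝ (Fin n)) 1,
              ∏ i, ((ν : EuclideanSpace ℝ (Fin n)) i) ^ c α i ∂(sphereMeasure n) := by
    simp only [hdet]
    rw [integral_finset_sum _ (fun σ _ => integrable_finset_sum _ (fun α _ => hint _ _))]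
    refine Finset.sum_congr rfl fun σ _ => ?_
    rw [integral_finset_sum _ (fun α _ => hint _ _)]
    exact Finset.sum_congr rfl fun α _ => integral_const_mul _ _
  have hcard : ∀ α : Fin (2 * r) → Fin n, ∑ i, c α i = 2 * r := by
    intro α
    rw [← Finset.card_eq_sum_card_fiberwise (fun t (_ : t ∈ Finset.univ) => Finset.mem_univ (α t)),
      Finset.card_univ, Fintype.card_fin]
  rw [hswap, Finset.mul_sum, Finset.mul_sum]
  refine Finset.sum_congr rfl fun σ _ => ?_
  rw [Finset.mul_sum, Finset.mul_sum]
  refine Finset.sum_congr rfl fun α _ => ?_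
  have hterm := term_eval r n hr hn (c α) (hcard α)
  rw [show (1 / sphereVolume (2 * r + n - 1)) *
      ((((Equiv.Perm.sign σ : ℤ) : ℝ) * ∏ t, H (α t) t (σ t)) *
        ∫ ν : Metric.sphere (0 : EuclideanSpace ℝ (Fin n)) 1,
          ∏ i, ((ν : EuclideanSpace ℝ (Fin n)) i) ^ c α i ∂(sphereMeasure n))
    = ((((Equiv.Perm.sign σ : ℤ) : ℝ) * ∏ t, H (α t) t (σ t)) *
        ((1 / sphereVolume (2 * r + n - 1)) *
          ∫ ν : Metric.sphere (0 : EuclideanSpace ℝ (Fin n)) 1,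
            ∏ i, ((ν : EuclideanSpace ℝ (Fin n)) i) ^ c α i ∂(sphereMeasure n))) from by ring,
    hterm]
  by_cases hev : ∀ i : Fin n, Even (c α i)
  · rw [if_pos hev, if_pos hev]
    ring
  · rw [if_neg hev, if_neg hev]
    ring
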